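/- Fix data (y_i,x_i)_{i=1}^n, tau > 0, beta* supported on a set of size s, and scalars lambda > 0, phi_0 > 0, gamma_u > 1, L_0 > 0, A > 0. Assume the gradient Lipschitz condition ||grad L_hat_tau(beta_1) - grad L_hat_tau(beta_2)||_inf <= L_0*||beta_1 - beta_2||_2 for all beta_1, beta_2 in R^d. Let beta^{(0)} = 0 and for each k >= 1 let phi^{(k)} in [phi_0, gamma_u*L_0] and let beta^{(k)} minimize beta |-> F(beta; phi^{(k)}, beta^{(k-1)}) + lambda*||beta||_1, with the local majorization F(beta^{(k)}; phi^{(k)}, beta^{(k-1)}) >= L_hat_tau(beta^{(k)}). Suppose some minimizer beta_hat of beta |-> L_hat_tau(beta) + lambda*||beta||_1 satisfies ||beta_hat - beta*||_2 <= A*sqrt(s)*lambda. Then there exists a constant C_1 > 0, depending only on A and on the ratio gamma_u*L_0/phi_0, such that for every eps_c > 0 and every integer k >= C_1 * L_0^2 * (1+gamma_u)^2 * (||beta*||_2 + sqrt(s)*lambda)^2 / eps_c^2, the iterate beta^{(k)} satisfies omega_lambda(beta^{(k)}) <= eps_c. -/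

import Mathlib

set_option autoImplicit false

open MeasureTheory ProbabilityTheory Filter

noncomputable section
set_option maxHeartbeats 2000000


/-- The Huber loss with robustification parameter `τ`. -/
def huber (τ x : ℝ) : ℝ := if |x| ≤ τ then x ^ 2 / 2 else τ * |x| - τ ^ 2 / 2

/-- The derivative of the Huber loss. -/
def huberDeriv (τ x : ℝ) : ℝ := if |x| ≤ τ then x else τ * Real.sign x

/-- Empirical Huber loss `L̂_τ(β) = n⁻¹ ∑ᵢ ℓ_τ(yᵢ - ⟨xᵢ, β⟩)`. -/
def empLoss {n d : ℕ} (y : Fin n → ℝ) (X : Fin n → Fin d → ℝ) (τ : ℝ)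
    (β : Fin d → ℝ) : ℝ :=
  (n : ℝ)⁻¹ * ∑ i, huber τ (y i - ∑ j, X i j * β j)

/-- Gradient of the empirical Huber loss:
`∇L̂_τ(β) = -n⁻¹ ∑ᵢ ℓ'_τ(yᵢ - ⟨xᵢ, β⟩) xᵢ`. -/
def empGrad {n d : ℕ} (y : Fin n → ℝ) (X : Fin n → Fin d → ℝ) (τ : ℝ)
    (β : Fin d → ℝ) : Fin d → ℝ :=
  fun j => -(n : ℝ)⁻¹ * ∑ i, huberDeriv τ (y i - ∑ j', X i j' * β j') * X i j

/-- ℓ¹ norm on `Fin d → ℝ`. -/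
def norm1 {d : ℕ} (v : Fin d → ℝ) : ℝ := ∑ j, |v j|

/-- Euclidean (ℓ²) norm on `Fin d → ℝ`. -/
def norm2 {d : ℕ} (v : Fin d → ℝ) : ℝ := Real.sqrt (∑ j, v j ^ 2)

/-- Sup (ℓ^∞) norm on `Fin d → ℝ`. -/
def normInf {d : ℕ} (v : Fin d → ℝ) : ℝ := ⨆ j, |v j|

/-- The subdifferential of the ℓ¹ norm at `β`. -/
def l1Subdiff {d : ℕ} (β : Fin d → ℝ) : Set (Fin d → ℝ) :=
  {ξ | ∀ j, if β j = 0 then ξ j ∈ Set.Icc (-1 : ℝ) 1 else ξ j = Real.sign (β j)}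

/-- `β` is an `ε`-optimal solution of `min L̂_τ + ‖lam ∘ ·‖₁`:  the suboptimality
measure `ω_lam(β) = min_{ξ ∈ ∂‖β‖₁} ‖∇L̂_τ(β) + lam ∘ ξ‖_∞` is at most `ε`. -/
def IsEpsOptimal {n d : ℕ} (y : Fin n → ℝ) (X : Fin n → Fin d → ℝ) (τ : ℝ)
    (lam : Fin d → ℝ) (ε : ℝ) (β : Fin d → ℝ) : Prop :=
  ∃ ξ ∈ l1Subdiff β, normInf (fun j => empGrad y X τ β j + lam j * ξ j) ≤ ε

/-- The isotropic quadratic majorant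
`F(β; φ, β') = L̂_τ(β') + ⟨∇L̂_τ(β'), β - β'⟩ + (φ/2)‖β - β'‖₂²`. -/
def Fmaj {n d : ℕ} (y : Fin n → ℝ) (X : Fin n → Fin d → ℝ) (τ φ : ℝ)
    (βp β : Fin d → ℝ) : ℝ :=
  empLoss y X τ βp + (∑ j, empGrad y X τ βp j * (β j - βp j)) +
    φ / 2 * (norm2 (fun j => β j - βp j)) ^ 2


lemma huber_cvx {τ : ℝ} (hτ : 0 < τ) (u v : ℝ) :
    huber τ u + huberDeriv τ u * (v - u) ≤ huber τ v := by
  unfold huber huberDeriv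
  split_ifs with h1 h2 h2
  · nlinarith [sq_nonneg (v - u)]
  · rcases abs_cases u with ⟨hu1, hu2⟩ | ⟨hu1, hu2⟩ <;>
      rcases abs_cases v with ⟨hv1, hv2⟩ | ⟨hv1, hv2⟩ <;>
      rw [hu1] at h1 <;> rw [hv1] <;> rw [hv1] at h2 <;>
      nlinarith [sq_nonneg (τ-u), sq_nonneg (τ+u)]
  · rcases abs_cases u with ⟨hu1, hu2⟩ | ⟨hu1, hu2⟩
    · rw [hu1] at h1 ⊢; rw [Real.sign_of_pos (by linarith : (0:ℝ) < u)]
      nlinarith [sq_nonneg (τ-v)]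
    · rw [hu1] at h1 ⊢; rw [Real.sign_of_neg hu2]
      nlinarith [sq_nonneg (τ+v)]
  · rcases abs_cases u with ⟨hu1, hu2⟩ | ⟨hu1, hu2⟩ <;>
      rcases abs_cases v with ⟨hv1, hv2⟩ | ⟨hv1, hv2⟩ <;>
      rw [hu1] at h1 ⊢ <;> rw [hv1] <;> rw [hv1] at h2
    · rw [Real.sign_of_pos (by linarith : (0:ℝ) < u)]; nlinarith
    · rw [Real.sign_of_pos (by linarith : (0:ℝ) < u)]; nlinarith
    · rw [Real.sign_of_neg hu2]; nlinarith
    · rw [Real.sign_of_neg hu2]; nlinarith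

lemma empLoss_cvx {n d : ℕ} (y : Fin n → ℝ) (X : Fin n → Fin d → ℝ) {τ : ℝ}
    (hτ : 0 < τ) (a b : Fin d → ℝ) :
    empLoss y X τ a + ∑ j, empGrad y X τ a j * (b j - a j) ≤ empLoss y X τ b := by
  have hgrad : ∑ j, empGrad y X τ a j * (b j - a j)
      = (n : ℝ)⁻¹ * ∑ i, huberDeriv τ (y i - ∑ j', X i j' * a j') *
          ((y i - ∑ j, X i j * b j) - (y i - ∑ j, X i j * a j)) := by
    simp only [empGrad, Finset.mul_sum, Finset.sum_mul, neg_mul]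
    rw [Finset.sum_comm]
    apply Finset.sum_congr rfl; intro i _
    have h : (y i - ∑ j, X i j * b j) - (y i - ∑ j', X i j' * a j')
        = ∑ j, (X i j * a j - X i j * b j) := by
      rw [Finset.sum_sub_distrib]; ring
    rw [h, Finset.mul_sum, Finset.mul_sum]
    exact Finset.sum_congr rfl fun j _ => by ring
  rw [hgrad]
  simp only [empLoss, ← mul_add]
  apply mul_le_mul_of_nonneg_left _ (by positivity)
  rw [← Finset.sum_add_distrib]
  exact Finset.sum_le_sum fun i _ => huber_cvx hτ _ _

lemma sq_norm2 {d : ℕ} (v : Fin d → ℝ) : norm2 v ^ 2 = ∑ j, v j ^ 2 :=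
  Real.sq_sqrt (Finset.sum_nonneg fun j _ => sq_nonneg _)

lemma norm2_nonneg {d : ℕ} (v : Fin d → ℝ) : 0 ≤ norm2 v := Real.sqrt_nonneg _

lemma norm2_eq_norm {d : ℕ} (v : Fin d → ℝ) :
    norm2 v = ‖((WithLp.equiv 2 (Fin d → ℝ)).symm v : EuclideanSpace ℝ (Fin d))‖ := by
  rw [EuclideanSpace.norm_eq]
  simp [norm2, Real.norm_eq_abs, sq_abs]

lemma norm2_triangle {d : ℕ} (u v w : Fin d → ℝ) (h : ∀ j, w j = u j + v j) :
    norm2 w ≤ norm2 u + norm2 v := by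
  have : w = fun j => u j + v j := funext h
  subst this
  rw [norm2_eq_norm, norm2_eq_norm, norm2_eq_norm]
  exact norm_add_le _ _


lemma normInf_le {d : ℕ} (v : Fin d → ℝ) {c : ℝ} (hc : 0 ≤ c) (h : ∀ j, |v j| ≤ c) :
    normInf v ≤ c := Real.iSup_le (fun j => h j) hc

lemma le_normInf {d : ℕ} (v : Fin d → ℝ) (j : Fin d) : |v j| ≤ normInf v :=
  le_ciSup (f := fun j => |v j|) (Set.Finite.bddAbove (Set.finite_range _)) j

lemma normInf_nonneg {d : ℕ} (v : Fin d → ℝ) : 0 ≤ normInf v :=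
  Real.iSup_nonneg fun _ => abs_nonneg _

lemma abs_le_norm2 {d : ℕ} (v : Fin d → ℝ) (j : Fin d) : |v j| ≤ norm2 v := by
  rw [← Real.sqrt_sq_eq_abs]
  exact Real.sqrt_le_sqrt (Finset.single_le_sum (f := fun j => v j ^ 2)
    (fun _ _ => sq_nonneg _) (Finset.mem_univ j))

lemma Fmaj_self {n d : ℕ} (y : Fin n → ℝ) (X : Fin n → Fin d → ℝ) (τ φv : ℝ)
    (βp : Fin d → ℝ) : Fmaj y X τ φv βp βp = empLoss y X τ βp := by
  simp [Fmaj, norm2]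

lemma Fmaj_expand {n d : ℕ} (y : Fin n → ℝ) (X : Fin n → Fin d → ℝ) (τ φv : ℝ)
    (βp u b : Fin d → ℝ) :
    Fmaj y X τ φv βp b = Fmaj y X τ φv βp u
      + ∑ j, (empGrad y X τ βp j + φv * (u j - βp j)) * (b j - u j)
      + φv / 2 * ∑ j, (b j - u j) ^ 2 := by
  simp only [Fmaj, sq_norm2]
  have idA : ∑ j, empGrad y X τ βp j * (b j - βp j)
      = ∑ j, empGrad y X τ βp j * (u j - βp j) + ∑ j, empGrad y X τ βp j * (b j - u j) := by
    rw [← Finset.sum_add_distrib]; exact Finset.sum_congr rfl fun j _ => by ring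
  have idB : ∑ j, (b j - βp j) ^ 2
      = ∑ j, (u j - βp j) ^ 2 + (∑ j, (b j - u j) ^ 2 + 2 * ∑ j, ((u j - βp j) * (b j - u j))) := by
    rw [Finset.mul_sum, ← Finset.sum_add_distrib, ← Finset.sum_add_distrib]
    exact Finset.sum_congr rfl fun j _ => by ring
  have idC : ∑ j, (empGrad y X τ βp j + φv * (u j - βp j)) * (b j - u j)
      = ∑ j, empGrad y X τ βp j * (b j - u j) + φv * ∑ j, ((u j - βp j) * (b j - u j)) := by
    rw [Finset.mul_sum, ← Finset.sum_add_distrib]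
    exact Finset.sum_congr rfl fun j _ => by ring
  rw [idA, idB, idC]; ring

lemma coord {φv lam : ℝ} (hφ : 0 < φv) (hlam : 0 < lam) (g c : ℝ)
    (h : ∀ t : ℝ, 0 ≤ g * t + φv / 2 * t ^ 2 + lam * (|c + t| - |c|)) :
    ∃ ξ : ℝ, (if c = 0 then ξ ∈ Set.Icc (-1 : ℝ) 1 else ξ = Real.sign c) ∧ lam * ξ = -g := by
  by_cases hc : c = 0
  · subst hc
    simp only [zero_add, abs_zero, sub_zero] at h
    have h1 : g ≤ lam := by
      by_contra hgt; push_neg at hgt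
      have hq : 0 < (g - lam) / φv := div_pos (by linarith) hφ
      have hfq : φv * ((g - lam) / φv) = g - lam := by field_simp
      have ht := h (-((g - lam) / φv))
      rw [abs_of_neg (neg_lt_zero.mpr hq)] at ht
      nlinarith [mul_pos (show (0:ℝ) < g - lam by linarith) hq]
    have h2 : -lam ≤ g := by
      by_contra hgt; push_neg at hgt
      have ht := h ((-(g + lam)) / φv)
      have hp : 0 < (-(g + lam)) / φv := div_pos (by linarith) hφ
      have hfq : φv * ((-(g + lam)) / φv) = -(g + lam) := by field_simp
      rw [abs_of_pos hp] at ht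
      nlinarith [mul_pos (show (0:ℝ) < -(g + lam) by linarith) hp]
    refine ⟨-g / lam, ?_, by field_simp⟩
    rw [if_pos rfl]
    constructor
    · rw [le_div_iff₀ hlam]; linarith
    · rw [div_le_one hlam]; linarith
  · rcases lt_or_gt_of_ne hc with hneg | hpos
    · have hub : g ≤ lam := by
        by_contra hgt; push_neg at hgt
        have hq : 0 < (g - lam) / φv := div_pos (by linarith) hφ
        have hfq : φv * ((g - lam) / φv) = g - lam := by field_simp
        set t : ℝ := -((g - lam) / φv) with htdef
        have ht0 : t < 0 := neg_lt_zero.mpr hq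
        have ht := h t
        rw [abs_of_neg (by linarith : c + t < 0), abs_of_neg hneg] at ht
        nlinarith [mul_pos (show (0:ℝ) < g - lam by linarith) hq]
      have hlb : lam ≤ g := by
        by_contra hgt; push_neg at hgt
        set m : ℝ := min (-c) ((lam - g) / φv) with hmdef
        have hm0 : 0 < m := lt_min (by linarith) (by apply div_pos (by linarith) hφ)
        have hm1 : c + m ≤ 0 := by
          have := min_le_left (-c) ((lam - g) / φv); rw [← hmdef] at this; linarith
        have hm2 : φv * m ≤ lam - g := by
          have h3 := min_le_right (-c) ((lam - g) / φv); rw [← hmdef] at h3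
          have := (le_div_iff₀ hφ).mp h3; linarith
        have ht := h m
        rw [abs_of_nonpos hm1, abs_of_neg hneg] at ht
        nlinarith [mul_le_mul_of_nonneg_right hm2 hm0.le]
      have hg : g = lam := le_antisymm hub hlb
      exact ⟨-1, by rw [if_neg hc, Real.sign_of_neg hneg], by rw [hg]; ring⟩
    · have hub : -lam ≤ g := by
        by_contra hgt; push_neg at hgt
        have hq : 0 < (-(g + lam)) / φv := div_pos (by linarith) hφ
        have hfq : φv * ((-(g + lam)) / φv) = -(g + lam) := by field_simp
        set t : ℝ := (-(g + lam)) / φv with htdef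
        have ht0 : 0 < t := hq
        have ht := h t
        rw [abs_of_pos (by linarith : 0 < c + t), abs_of_pos hpos] at ht
        nlinarith [mul_pos (show (0:ℝ) < -(g + lam) by linarith) hq]
      have hlb : g ≤ -lam := by
        by_contra hgt; push_neg at hgt
        set m : ℝ := min c ((g + lam) / φv) with hmdef
        have hm0 : 0 < m := lt_min hpos (by apply div_pos (by linarith) hφ)
        have hm1 : 0 ≤ c + -m := by
          have := min_le_left c ((g + lam) / φv); rw [← hmdef] at this; linarith
        have hm2 : φv * m ≤ g + lam := by
          have h3 := min_le_right c ((g + lam) / φv); rw [← hmdef] at h3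
          have := (le_div_iff₀ hφ).mp h3; linarith
        have ht := h (-m)
        rw [abs_of_nonneg hm1, abs_of_pos hpos] at ht
        nlinarith [mul_le_mul_of_nonneg_right hm2 hm0.le]
      have hg : g = -lam := le_antisymm hlb hub
      exact ⟨1, by rw [if_neg hc, Real.sign_of_pos hpos], by rw [hg]; ring⟩

lemma minimizer_subgrad {n d : ℕ} (y : Fin n → ℝ) (X : Fin n → Fin d → ℝ)
    {τ lam φv : ℝ} (hlam : 0 < lam) (hφ : 0 < φv) (βp u : Fin d → ℝ)
    (hmin : ∀ b, Fmaj y X τ φv βp u + lam * norm1 u ≤ Fmaj y X τ φv βp b + lam * norm1 b) :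
    ∃ ξ : Fin d → ℝ,
      (∀ j, if u j = 0 then ξ j ∈ Set.Icc (-1 : ℝ) 1 else ξ j = Real.sign (u j)) ∧
      ∀ j, lam * ξ j = -(empGrad y X τ βp j + φv * (u j - βp j)) := by
  have key : ∀ (j : Fin d) (t : ℝ),
      0 ≤ (empGrad y X τ βp j + φv * (u j - βp j)) * t + φv / 2 * t ^ 2
        + lam * (|u j + t| - |u j|) := by
    intro j t
    set b := Function.update u j (u j + t) with hb
    have e1 : ∑ j', (empGrad y X τ βp j' + φv * (u j' - βp j')) * (b j' - u j')
        = (empGrad y X τ βp j + φv * (u j - βp j)) * t := by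
      rw [Finset.sum_eq_single j]
      · rw [hb, Function.update_self]; ring
      · intro j' _ hne; rw [hb, Function.update_of_ne hne]; ring
      · intro hj; exact absurd (Finset.mem_univ j) hj
    have e2 : ∑ j', (b j' - u j') ^ 2 = t ^ 2 := by
      rw [Finset.sum_eq_single j]
      · rw [hb, Function.update_self]; ring
      · intro j' _ hne; rw [hb, Function.update_of_ne hne]; ring
      · intro hj; exact absurd (Finset.mem_univ j) hj
    have e3 : norm1 b - norm1 u = |u j + t| - |u j| := by
      rw [norm1, norm1, ← Finset.sum_sub_distrib, Finset.sum_eq_single j]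
      · rw [hb, Function.update_self]
      · intro j' _ hne; rw [hb, Function.update_of_ne hne]; ring
      · intro hj; exact absurd (Finset.mem_univ j) hj
    have hm := hmin b
    rw [Fmaj_expand y X τ φv βp u b, e1, e2] at hm
    have e4 : lam * norm1 b = lam * norm1 u + lam * (|u j + t| - |u j|) := by
      rw [← e3]; ring
    linarith
  have hc : ∀ j, ∃ ξj : ℝ,
      (if u j = 0 then ξj ∈ Set.Icc (-1 : ℝ) 1 else ξj = Real.sign (u j)) ∧
      lam * ξj = -(empGrad y X τ βp j + φv * (u j - βp j)) :=
    fun j => coord hφ hlam _ _ (key j)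
  choose ξ h1 h2 using hc
  exact ⟨ξ, h1, h2⟩


/-- Theorem 3.1: sublinear iteration complexity of the LAMM
algorithm in the contraction stage. -/
theorem statement_8 :
    ∀ A R : ℝ, 0 < A → 0 < R →
    ∃ C1 : ℝ, 0 < C1 ∧
      ∀ (n d : ℕ) (y : Fin n → ℝ) (X : Fin n → Fin d → ℝ)
        (τ lam φ0 γu L0 : ℝ) (βs : Fin d → ℝ) (S : Finset (Fin d))
        (β : ℕ → Fin d → ℝ) (φ : ℕ → ℝ),
        0 < τ → 0 < lam → 0 < φ0 → 1 < γu → 0 < L0 →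
        γu * L0 / φ0 = R →
        (∀ j ∉ S, βs j = 0) →
        (∀ β1 β2 : Fin d → ℝ,
          normInf (fun j => empGrad y X τ β1 j - empGrad y X τ β2 j) ≤
            L0 * norm2 (fun j => β1 j - β2 j)) →
        β 0 = (fun _ => 0) →
        (∀ k : ℕ, 1 ≤ k →
          φ0 ≤ φ k ∧ φ k ≤ γu * L0 ∧
          (∀ b : Fin d → ℝ,
            Fmaj y X τ (φ k) (β (k - 1)) (β k) + lam * norm1 (β k) ≤
              Fmaj y X τ (φ k) (β (k - 1)) b + lam * norm1 b) ∧
          empLoss y X τ (β k) ≤ Fmaj y X τ (φ k) (β (k - 1)) (β k)) →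
        (∃ βh : Fin d → ℝ,
          (∀ b : Fin d → ℝ, empLoss y X τ βh + lam * norm1 βh ≤
            empLoss y X τ b + lam * norm1 b) ∧
          norm2 (fun j => βh j - βs j) ≤ A * Real.sqrt S.card * lam) →
        ∀ εc : ℝ, 0 < εc → ∀ k : ℕ,
          C1 * L0 ^ 2 * (1 + γu) ^ 2 *
              (norm2 βs + Real.sqrt S.card * lam) ^ 2 / εc ^ 2 ≤ k →
          ∃ ξ ∈ l1Subdiff (β k),
            normInf (fun j => empGrad y X τ (β k) j + lam * ξ j) ≤ εc := by
  intro A R hA hR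
  refine ⟨(A + 1) ^ 2 * (4 + 2 * R), by positivity, ?_⟩
  intro n d y X τ lam φ0 γu L0 βs S β φ hτ hlam hφ0 hγu hL0 hRdef hsupp hLip hβ0 hiter hex
  obtain ⟨βh, hβhmin, hβhclose⟩ := hex
  have hγu0 : (0:ℝ) < 1 + γu := by linarith
  have hB0 : 0 ≤ norm2 βs + Real.sqrt S.card * lam :=
    add_nonneg (norm2_nonneg _) (mul_nonneg (Real.sqrt_nonneg _) hlam.le)
  have hρ0 : norm2 βh ≤ (A + 1) * (norm2 βs + Real.sqrt S.card * lam) := by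
    have t1 : norm2 βh ≤ norm2 (fun j => βh j - βs j) + norm2 βs :=
      norm2_triangle _ _ _ (fun j => by ring)
    have t2 : A * (Real.sqrt S.card * lam) ≤ A * (norm2 βs + Real.sqrt S.card * lam) := by
      apply mul_le_mul_of_nonneg_left _ hA.le
      linarith [norm2_nonneg βs]
    nlinarith [hβhclose, norm2_nonneg βs, Real.sqrt_nonneg (S.card : ℝ), hlam.le]
  -- per-step facts
  have hSqnn : ∀ m : ℕ, (0:ℝ) ≤ ∑ j, (βh j - β m j) ^ 2 :=
    fun m => Finset.sum_nonneg fun _ _ => sq_nonneg _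
  have hDqnn : ∀ m : ℕ, (0:ℝ) ≤ ∑ j, (β (m+1) j - β m j) ^ 2 :=
    fun m => Finset.sum_nonneg fun _ _ => sq_nonneg _
  have hstep : ∀ m : ℕ,
      (empLoss y X τ (β (m+1)) + lam * norm1 (β (m+1))
          + φ0 / 2 * (∑ j, (β (m+1) j - β m j) ^ 2)
        ≤ empLoss y X τ (β m) + lam * norm1 (β m)) ∧
      ((empLoss y X τ (β (m+1)) + lam * norm1 (β (m+1)))
          - (empLoss y X τ βh + lam * norm1 βh)
        ≤ γu * L0 / 2 * ((∑ j, (βh j - β m j) ^ 2) - (∑ j, (βh j - β (m+1) j) ^ 2))) ∧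
      ((∑ j, (βh j - β (m+1) j) ^ 2) ≤ ∑ j, (βh j - β m j) ^ 2) ∧
      (∃ ξ ∈ l1Subdiff (β (m+1)),
        normInf (fun j => empGrad y X τ (β (m+1)) j + lam * ξ j)
          ≤ L0 * (1 + γu) * Real.sqrt (∑ j, (β (m+1) j - β m j) ^ 2)) := by
    intro m
    obtain ⟨hφl, hφu, hminm, hmajm⟩ := hiter (m+1) (Nat.le_add_left 1 m)
    simp only [Nat.add_sub_cancel] at hminm hmajm
    have hφpos : 0 < φ (m+1) := lt_of_lt_of_le hφ0 hφl
    obtain ⟨ξ, hξmem, hξeq⟩ := minimizer_subgrad y X hlam hφpos (β m) (β (m+1)) hminm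
    have hξprop : ∀ (j : Fin d) (z : ℝ),
        ξ j * z ≤ |z| ∧ ξ j * (β (m+1) j) = |β (m+1) j| := by
      intro j z
      have hj := hξmem j
      by_cases h0 : β (m+1) j = 0
      · rw [if_pos h0] at hj
        obtain ⟨hl, hr⟩ := hj
        constructor
        · calc ξ j * z ≤ |ξ j * z| := le_abs_self _
            _ = |ξ j| * |z| := abs_mul _ _
            _ ≤ 1 * |z| :=
              mul_le_mul_of_nonneg_right (abs_le.mpr ⟨hl, hr⟩) (abs_nonneg z)
            _ = |z| := one_mul _
        · rw [h0]; simp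
      · rw [if_neg h0] at hj
        rcases lt_or_gt_of_ne h0 with hn | hp
        · rw [hj, Real.sign_of_neg hn]
          refine ⟨?_, by rw [abs_of_neg hn]; ring⟩
          calc (-1) * z ≤ |(-1) * z| := le_abs_self _
            _ = |z| := by rw [abs_mul, abs_neg, abs_one, one_mul]
        · rw [hj, Real.sign_of_pos hp]
          refine ⟨?_, by rw [abs_of_pos hp]; ring⟩
          calc 1 * z ≤ |1 * z|  := le_abs_self _
            _ = |z| := by rw [one_mul]
    have hstrong : ∀ b : Fin d → ℝ,
        Fmaj y X τ (φ (m+1)) (β m) (β (m+1)) + lam * norm1 (β (m+1))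
          + φ (m+1) / 2 * ∑ j, (b j - β (m+1) j) ^ 2
        ≤ Fmaj y X τ (φ (m+1)) (β m) b + lam * norm1 b := by
      intro b
      rw [Fmaj_expand y X τ (φ (m+1)) (β m) (β (m+1)) b]
      have hws : lam * norm1 b - lam * norm1 (β (m+1))
          = ∑ j, lam * (|b j| - |β (m+1) j|) := by
        rw [norm1, norm1, Finset.mul_sum, Finset.mul_sum, ← Finset.sum_sub_distrib]
        exact Finset.sum_congr rfl fun j _ => by ring
      have hsum : 0 ≤ (∑ j, (empGrad y X τ (β m) j + φ (m+1) * (β (m+1) j - β m j))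
            * (b j - β (m+1) j))
          + (lam * norm1 b - lam * norm1 (β (m+1))) := by
        rw [hws, ← Finset.sum_add_distrib]
        apply Finset.sum_nonneg
        intro j _
        have he : (empGrad y X τ (β m) j + φ (m+1) * (β (m+1) j - β m j))
            * (b j - β (m+1) j) = -(lam * ξ j) * (b j - β (m+1) j) := by
          linear_combination (b j - β (m+1) j) * hξeq j
        rw [he]
        have h1 := (hξprop j (b j)).1
        have h2 := (hξprop j 0).2
        nlinarith [mul_le_mul_of_nonneg_left h1 hlam.le, h2, hlam.le]
      linarith [hsum]
    have hDqe : ∑ j, (β m j - β (m+1) j) ^ 2 = ∑ j, (β (m+1) j - β m j) ^ 2 :=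
      Finset.sum_congr rfl fun j _ => by ring
    have hA1 := hstrong (β m)
    rw [Fmaj_self, hDqe] at hA1
    have hmaj' : empLoss y X τ (β (m+1)) + lam * norm1 (β (m+1))
        ≤ Fmaj y X τ (φ (m+1)) (β m) (β (m+1)) + lam * norm1 (β (m+1)) := by linarith
    have partA : empLoss y X τ (β (m+1)) + lam * norm1 (β (m+1))
        + φ0 / 2 * (∑ j, (β (m+1) j - β m j) ^ 2)
        ≤ empLoss y X τ (β m) + lam * norm1 (β m) := by
      have h1 : φ0 / 2 * (∑ j, (β (m+1) j - β m j) ^ 2)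
          ≤ φ (m+1) / 2 * (∑ j, (β (m+1) j - β m j) ^ 2) := by
        apply mul_le_mul_of_nonneg_right _ (hDqnn m)
        linarith
      linarith
    -- part B
    have hB1 := hstrong βh
    have hFh : Fmaj y X τ (φ (m+1)) (β m) βh
        ≤ empLoss y X τ βh + φ (m+1) / 2 * ∑ j, (βh j - β m j) ^ 2 := by
      have hc := empLoss_cvx y X hτ (β m) βh
      rw [Fmaj]
      rw [sq_norm2]
      linarith
    have hBkey : empLoss y X τ (β (m+1)) + lam * norm1 (β (m+1))
          + φ (m+1) / 2 * ∑ j, (βh j - β (m+1) j) ^ 2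
        ≤ (empLoss y X τ βh + lam * norm1 βh)
          + φ (m+1) / 2 * ∑ j, (βh j - β m j) ^ 2 := by linarith
    have hfsle := hβhmin (β (m+1))
    have partC : (∑ j, (βh j - β (m+1) j) ^ 2) ≤ ∑ j, (βh j - β m j) ^ 2 := by nlinarith
    have partB : (empLoss y X τ (β (m+1)) + lam * norm1 (β (m+1)))
          - (empLoss y X τ βh + lam * norm1 βh)
        ≤ γu * L0 / 2 * ((∑ j, (βh j - β m j) ^ 2) - (∑ j, (βh j - β (m+1) j) ^ 2)) := by
      have h1 : φ (m+1) / 2 * ((∑ j, (βh j - β m j) ^ 2) - (∑ j, (βh j - β (m+1) j) ^ 2))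
          ≤ γu * L0 / 2 * ((∑ j, (βh j - β m j) ^ 2) - (∑ j, (βh j - β (m+1) j) ^ 2)) := by
        apply mul_le_mul_of_nonneg_right _ (by linarith)
        linarith
      linarith
    refine ⟨partA, partB, partC, ξ, hξmem, ?_⟩
    have hnd : norm2 (fun j => β (m+1) j - β m j)
        = Real.sqrt (∑ j, (β (m+1) j - β m j) ^ 2) := rfl
    apply normInf_le _ (mul_nonneg (mul_nonneg hL0.le hγu0.le) (Real.sqrt_nonneg _))
    intro j
    have he : empGrad y X τ (β (m+1)) j + lam * ξ j
        = (empGrad y X τ (β (m+1)) j - empGrad y X τ (β m) j)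
          - φ (m+1) * (β (m+1) j - β m j) := by linear_combination hξeq j
    rw [he]
    have t1 : |empGrad y X τ (β (m+1)) j - empGrad y X τ (β m) j|
        ≤ L0 * norm2 (fun j => β (m+1) j - β m j) :=
      le_trans (le_normInf (fun j => empGrad y X τ (β (m+1)) j - empGrad y X τ (β m) j) j)
        (hLip _ _)
    have t2 : |φ (m+1) * (β (m+1) j - β m j)|
        ≤ γu * L0 * norm2 (fun j => β (m+1) j - β m j) := by
      rw [abs_mul, abs_of_pos hφpos]
      have h3 := abs_le_norm2 (fun j => β (m+1) j - β m j) j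
      have h4 : 0 ≤ γu * L0 := by positivity
      nlinarith [abs_nonneg (β (m+1) j - β m j), norm2_nonneg (fun j => β (m+1) j - β m j)]
    calc |(empGrad y X τ (β (m+1)) j - empGrad y X τ (β m) j)
          - φ (m+1) * (β (m+1) j - β m j)|
        ≤ |empGrad y X τ (β (m+1)) j - empGrad y X τ (β m) j|
          + |φ (m+1) * (β (m+1) j - β m j)| := abs_sub _ _
      _ ≤ L0 * (1 + γu) * Real.sqrt (∑ j, (β (m+1) j - β m j) ^ 2) := by
          rw [← hnd]; linarith [t1, t2, (by ring :
            L0 * norm2 (fun j => β (m+1) j - β m j) + γu * L0 * norm2 (fun j => β (m+1) j - β m j)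
              = L0 * (1 + γu) * norm2 (fun j => β (m+1) j - β m j))]
  -- monotonicity and telescoping
  have hmono : ∀ m : ℕ, empLoss y X τ (β (m+1)) + lam * norm1 (β (m+1))
      ≤ empLoss y X τ (β m) + lam * norm1 (β m) := by
    intro m
    have h1 := (hstep m).1
    nlinarith [hDqnn m, hφ0]
  have htel : ∀ m : ℕ, (m:ℝ) * ((empLoss y X τ (β m) + lam * norm1 (β m))
        - (empLoss y X τ βh + lam * norm1 βh))
      ≤ γu * L0 / 2 * ((∑ j, (βh j - β 0 j) ^ 2) - (∑ j, (βh j - β m j) ^ 2)) := by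
    intro m
    induction m with
    | zero => simp
    | succ p ih =>
      have h2 := (hstep p).2.1
      have hgap0 : 0 ≤ (empLoss y X τ (β (p+1)) + lam * norm1 (β (p+1)))
          - (empLoss y X τ βh + lam * norm1 βh) := by linarith [hβhmin (β (p+1))]
      have hmul : (p:ℝ) * ((empLoss y X τ (β (p+1)) + lam * norm1 (β (p+1)))
            - (empLoss y X τ βh + lam * norm1 βh))
          ≤ (p:ℝ) * ((empLoss y X τ (β p) + lam * norm1 (β p))
            - (empLoss y X τ βh + lam * norm1 βh)) :=
        mul_le_mul_of_nonneg_left (by linarith [hmono p]) (Nat.cast_nonneg p)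
      push_cast
      nlinarith [ih, h2, hmul]
  -- final
  intro εc hεc k hk
  have hεc2 : (0:ℝ) < εc ^ 2 := by positivity
  have hk' : ((A + 1) ^ 2 * (4 + 2 * R)) * L0 ^ 2 * (1 + γu) ^ 2
      * (norm2 βs + Real.sqrt S.card * lam) ^ 2 ≤ (k:ℝ) * εc ^ 2 := by
    rw [div_le_iff₀ hεc2] at hk
    linarith
  have hSq0 : (∑ j, (βh j - β 0 j) ^ 2)
      ≤ (A + 1) ^ 2 * (norm2 βs + Real.sqrt S.card * lam) ^ 2 := by
    have e1 : (∑ j, (βh j - β 0 j) ^ 2) = norm2 βh ^ 2 := by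
      rw [sq_norm2]
      exact Finset.sum_congr rfl fun j _ => by rw [hβ0]; ring
    rw [e1]
    calc norm2 βh ^ 2 ≤ ((A + 1) * (norm2 βs + Real.sqrt S.card * lam)) ^ 2 :=
          pow_le_pow_left₀ (norm2_nonneg βh) hρ0 2
      _ = (A + 1) ^ 2 * (norm2 βs + Real.sqrt S.card * lam) ^ 2 := by ring
  cases k with
  | zero =>
    -- degenerate case: B = 0, βh = β 0 = 0 is a global minimizer
    have hBz : norm2 βs + Real.sqrt S.card * lam = 0 := by
      have hC1 : (0:ℝ) < (A + 1) ^ 2 * (4 + 2 * R) := by positivity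
      have hk0 : (A + 1) ^ 2 * (4 + 2 * R) * L0 ^ 2 * (1 + γu) ^ 2
          * (norm2 βs + Real.sqrt S.card * lam) ^ 2 ≤ 0 := by
        have : ((0:ℕ):ℝ) * εc ^ 2 = 0 := by norm_num
        linarith [hk', this.le, this.ge]
      by_contra hne
      have hBpos : 0 < norm2 βs + Real.sqrt S.card * lam := lt_of_le_of_ne hB0 (Ne.symm hne)
      have hpos := mul_pos (mul_pos (mul_pos hC1 (pow_pos hL0 2)) (pow_pos hγu0 2))
        (pow_pos hBpos 2)
      linarith
    have hβh2 : norm2 βh = 0 := by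
      have h6 := hρ0
      rw [hBz] at h6
      have h0 := norm2_nonneg βh
      linarith [h6]
    have hsum0 : ∑ j, βh j ^ 2 = 0 := by
      rw [← sq_norm2, hβh2]; ring
    have hzero : ∀ j, βh j = 0 := by
      intro j
      have h1 := (Finset.sum_eq_zero_iff_of_nonneg
        (fun j _ => sq_nonneg (βh j))).mp hsum0 j (Finset.mem_univ j)
      exact pow_eq_zero_iff two_ne_zero |>.mp h1
    have hbe : βh = (fun _ => (0:ℝ)) := funext fun j => hzero j
    rw [hβ0]
    -- key: gradient perturbation bound
    have hkey : ∀ (j : Fin d) (t : ℝ),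
        0 ≤ empGrad y X τ (Function.update (fun _ => (0:ℝ)) j t) j * t + lam * |t| := by
      intro j t
      set b := Function.update (fun _ => (0:ℝ)) j t with hbdef
      have hmin := hβhmin b
      rw [hbe] at hmin
      have hcvx := empLoss_cvx y X hτ b (fun _ => (0:ℝ))
      have h3 : ∑ j', empGrad y X τ b j' * ((fun _ => (0:ℝ)) j' - b j')
          = -(empGrad y X τ b j * t) := by
        rw [Finset.sum_eq_single j]
        · rw [hbdef, Function.update_self]; ring
        · intro j' _ hne; rw [hbdef, Function.update_of_ne hne]; ring
        · intro hj; exact absurd (Finset.mem_univ j) hj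
      have h4 : norm1 b = |t| := by
        rw [norm1, Finset.sum_eq_single j]
        · rw [hbdef, Function.update_self]
        · intro j' _ hne; rw [hbdef, Function.update_of_ne hne]; exact abs_zero
        · intro hj; exact absurd (Finset.mem_univ j) hj
      have h5 : norm1 (fun _ : Fin d => (0:ℝ)) = (0:ℝ) := by simp [norm1]
      rw [h3] at hcvx
      rw [h4, h5] at hmin
      nlinarith [hmin, hcvx]
    have htrans : ∀ (j : Fin d) (t : ℝ),
        |empGrad y X τ (Function.update (fun _ => (0:ℝ)) j t) j
          - empGrad y X τ (fun _ => (0:ℝ)) j| ≤ L0 * |t| := by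
      intro j t
      have hLn := hLip (Function.update (fun _ => (0:ℝ)) j t) (fun _ => (0:ℝ))
      have hnn : norm2 (fun j' => Function.update (fun _ => (0:ℝ)) j t j'
          - (fun _ => (0:ℝ)) j') = |t| := by
        rw [norm2]
        have e : ∑ j', (Function.update (fun _ => (0:ℝ)) j t j' - (fun _ => (0:ℝ)) j') ^ 2
            = t ^ 2 := by
          rw [Finset.sum_eq_single j]
          · rw [Function.update_self]; ring
          · intro j' _ hne; rw [Function.update_of_ne hne]; ring
          · intro hj; exact absurd (Finset.mem_univ j) hj
        rw [e, Real.sqrt_sq_eq_abs]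
      rw [hnn] at hLn
      exact le_trans (le_normInf (fun j' => empGrad y X τ
        (Function.update (fun _ => (0:ℝ)) j t) j'
        - empGrad y X τ (fun _ => (0:ℝ)) j') j) hLn
    have hgb : ∀ j, |empGrad y X τ (fun _ => (0:ℝ)) j| ≤ lam := by
      intro j
      rw [abs_le]
      constructor
      · have hfa : ∀ ε : ℝ, 0 < ε → -(empGrad y X τ (fun _ => (0:ℝ)) j) ≤ lam + ε := by
          intro ε hε
          have ht0 : 0 < ε / L0 := div_pos hε hL0
          have h1 := hkey j (ε / L0)
          rw [abs_of_pos ht0] at h1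
          have h2 : -(empGrad y X τ (Function.update (fun _ => (0:ℝ)) j (ε / L0)) j)
              ≤ lam := by nlinarith
          have h3 := htrans j (ε / L0)
          rw [abs_of_pos ht0] at h3
          have h4 : L0 * (ε / L0) = ε := by field_simp
          rw [h4] at h3
          have h5 := abs_le.mp h3
          linarith [h5.1, h5.2]
        linarith [le_of_forall_pos_le_add hfa]
      · have hfa : ∀ ε : ℝ, 0 < ε → empGrad y X τ (fun _ => (0:ℝ)) j ≤ lam + ε := by
          intro ε hε
          have ht0 : 0 < ε / L0 := div_pos hε hL0
          have h1 := hkey j (-(ε / L0))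
          rw [abs_neg, abs_of_pos ht0] at h1
          have h2 : empGrad y X τ (Function.update (fun _ => (0:ℝ)) j (-(ε / L0))) j
              ≤ lam := by nlinarith
          have h3 := htrans j (-(ε / L0))
          rw [abs_neg, abs_of_pos ht0] at h3
          have h4 : L0 * (ε / L0) = ε := by field_simp
          rw [h4] at h3
          have h5 := abs_le.mp h3
          linarith [h5.1, h5.2]
        linarith [le_of_forall_pos_le_add hfa]
    refine ⟨fun j => -(empGrad y X τ (fun _ => (0:ℝ)) j) / lam, ?_, ?_⟩
    · intro j
      rw [if_pos rfl]
      have hj := hgb j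
      rw [abs_le] at hj
      constructor
      · rw [le_div_iff₀ hlam]; nlinarith [hj.2]
      · rw [div_le_iff₀ hlam]; nlinarith [hj.1]
    · apply normInf_le _ hεc.le
      intro j
      have he : empGrad y X τ (fun _ => (0:ℝ)) j
          + lam * (-(empGrad y X τ (fun _ => (0:ℝ)) j) / lam) = 0 := by
        field_simp; ring
      rw [he, abs_zero]
      exact hεc.le
  | succ m =>
    obtain ⟨ξ, hmem, hbound⟩ := (hstep m).2.2.2
    refine ⟨ξ, hmem, ?_⟩
    have hw0 := normInf_nonneg (fun j => empGrad y X τ (β (m+1)) j + lam * ξ j)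
    have hXnn : 0 ≤ L0 * (1 + γu) * Real.sqrt (∑ j, (β (m+1) j - β m j) ^ 2) :=
      mul_nonneg (mul_nonneg hL0.le hγu0.le) (Real.sqrt_nonneg _)
    have hsq : (L0 * (1 + γu) * Real.sqrt (∑ j, (β (m+1) j - β m j) ^ 2)) ^ 2
        = L0 ^ 2 * (1 + γu) ^ 2 * (∑ j, (β (m+1) j - β m j) ^ 2) := by
      rw [mul_pow, mul_pow, Real.sq_sqrt (hDqnn m)]
    suffices hfin : (L0 * (1 + γu) * Real.sqrt (∑ j, (β (m+1) j - β m j) ^ 2)) ^ 2 ≤ εc ^ 2 by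
      nlinarith [hbound, hw0, hεc, hXnn]
    rw [hsq]
    cases m with
    | zero =>
      -- k = 1 : use Dq 0 ≤ 4 Sq 0
      have htri : Real.sqrt (∑ j, (β 1 j - β 0 j) ^ 2)
          ≤ norm2 (fun j => β 1 j - βh j) + norm2 (fun j => βh j - β 0 j) :=
        norm2_triangle (fun j => β 1 j - βh j) (fun j => βh j - β 0 j)
          (fun j => β 1 j - β 0 j) (fun j => by ring)
      have hs1 : (norm2 (fun j => β 1 j - βh j)) ^ 2 = ∑ j, (βh j - β 1 j) ^ 2 := by
        rw [sq_norm2]; exact Finset.sum_congr rfl fun j _ => by ring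
      have hs0 : (norm2 (fun j => βh j - β 0 j)) ^ 2 = ∑ j, (βh j - β 0 j) ^ 2 := by
        rw [sq_norm2]
      have hmon := (hstep 0).2.2.1
      have hn1 : norm2 (fun j => β 1 j - βh j) ≤ norm2 (fun j => βh j - β 0 j) := by
        have a1 := norm2_nonneg (fun j => β 1 j - βh j)
        have a2 := norm2_nonneg (fun j => βh j - β 0 j)
        nlinarith [hs1, hs0, hmon]
      have hD4 : (∑ j, (β 1 j - β 0 j) ^ 2) ≤ 4 * ∑ j, (βh j - β 0 j) ^ 2 := by
        have hsq2 := Real.sq_sqrt (hDqnn 0)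
        have a2 := norm2_nonneg (fun j => βh j - β 0 j)
        have a3 := Real.sqrt_nonneg (∑ j, (β 1 j - β 0 j) ^ 2)
        nlinarith [htri, hn1, hs0]
      have hLγ : (0:ℝ) ≤ L0 ^ 2 * (1 + γu) ^ 2 := by positivity
      have hk1 : (A + 1) ^ 2 * (4 + 2 * R) * L0 ^ 2 * (1 + γu) ^ 2
          * (norm2 βs + Real.sqrt S.card * lam) ^ 2 ≤ εc ^ 2 := by
        have : ((0+1 : ℕ) : ℝ) = 1 := by norm_num
        rw [this, one_mul] at hk'
        exact hk'
      have c1 := mul_le_mul_of_nonneg_left hD4 hLγ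
      have c2 := mul_le_mul_of_nonneg_left hSq0
        (by positivity : (0:ℝ) ≤ 4 * (L0 ^ 2 * (1 + γu) ^ 2))
      have c3 : 4 * (L0 ^ 2 * (1 + γu) ^ 2)
            * ((A + 1) ^ 2 * (norm2 βs + Real.sqrt S.card * lam) ^ 2)
          ≤ (A + 1) ^ 2 * (4 + 2 * R) * L0 ^ 2 * (1 + γu) ^ 2
            * (norm2 βs + Real.sqrt S.card * lam) ^ 2 := by
        linarith [mul_nonneg hR.le (mul_nonneg hLγ (mul_nonneg (sq_nonneg (A+1))
          (sq_nonneg (norm2 βs + Real.sqrt S.card * lam))))]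
      linarith [c1, c2, c3, hk1]
    | succ p =>
      -- k = p + 2 : use telescoping
      have htl := htel (p+1)
      have hdesc := (hstep (p+1)).1
      have hfsle := hβhmin (β (p+2))
      have hstep1 : ((p:ℝ)+1) * (φ0 / 2 * (∑ j, (β (p+2) j - β (p+1) j) ^ 2))
          ≤ ((p:ℝ)+1) * ((empLoss y X τ (β (p+1)) + lam * norm1 (β (p+1)))
            - (empLoss y X τ βh + lam * norm1 βh)) := by
        apply mul_le_mul_of_nonneg_left _ (by positivity)
        have hd2 : (p:ℕ)+1+1 = p+2 := rfl
        linarith [hdesc, hfsle]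
      have hstep2 : ((p:ℝ)+1) * ((empLoss y X τ (β (p+1)) + lam * norm1 (β (p+1)))
            - (empLoss y X τ βh + lam * norm1 βh))
          ≤ γu * L0 / 2 * (∑ j, (βh j - β 0 j) ^ 2) := by
        have hs := hSqnn (p+1)
        push_cast at htl
        linarith [htl, mul_nonneg (by positivity : (0:ℝ) ≤ γu * L0 / 2) hs]
      have hγL : γu * L0 = R * φ0 := by
        field_simp at hRdef
        linarith [hRdef]
      have hcomb : ((p:ℝ)+1) * (∑ j, (β (p+2) j - β (p+1) j) ^ 2)
          ≤ R * (∑ j, (βh j - β 0 j) ^ 2) := by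
        have h1 : ((p:ℝ)+1) * (φ0 / 2 * (∑ j, (β (p+2) j - β (p+1) j) ^ 2))
            ≤ R * φ0 / 2 * (∑ j, (βh j - β 0 j) ^ 2) := by
          rw [show R * φ0 / 2 * (∑ j, (βh j - β 0 j) ^ 2)
              = γu * L0 / 2 * (∑ j, (βh j - β 0 j) ^ 2) by rw [hγL]]
          linarith [hstep1, hstep2]
        have h2 : φ0 / 2 * (((p:ℝ)+1) * (∑ j, (β (p+2) j - β (p+1) j) ^ 2))
            ≤ φ0 / 2 * (R * (∑ j, (βh j - β 0 j) ^ 2)) := by linarith [h1]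
        exact le_of_mul_le_mul_left h2 (by positivity)
      have hp1 : (1:ℝ) ≤ (p:ℝ) + 1 := by
        have := (Nat.cast_nonneg p : (0:ℝ) ≤ (p:ℝ)); linarith
      have hkcast : ((p+1+1 : ℕ) : ℝ) = (p:ℝ) + 2 := by push_cast; ring
      rw [hkcast] at hk'
      have hLγ : (0:ℝ) ≤ L0 ^ 2 * (1 + γu) ^ 2 := by positivity
      have e1 : ((p:ℝ)+1) * (L0 ^ 2 * (1 + γu) ^ 2 * (∑ j, (β (p+2) j - β (p+1) j) ^ 2))
          ≤ L0 ^ 2 * (1 + γu) ^ 2 * (R * (∑ j, (βh j - β 0 j) ^ 2)) := by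
        linarith [mul_le_mul_of_nonneg_left hcomb hLγ]
      have e2 : R * (∑ j, (βh j - β 0 j) ^ 2)
          ≤ R * ((A + 1) ^ 2 * (norm2 βs + Real.sqrt S.card * lam) ^ 2) :=
        mul_le_mul_of_nonneg_left hSq0 hR.le
      have e3 : 2 * (L0 ^ 2 * (1 + γu) ^ 2
            * (R * ((A + 1) ^ 2 * (norm2 βs + Real.sqrt S.card * lam) ^ 2)))
          ≤ ((A + 1) ^ 2 * (4 + 2 * R)) * L0 ^ 2 * (1 + γu) ^ 2
            * (norm2 βs + Real.sqrt S.card * lam) ^ 2 := by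
        linarith [mul_nonneg (sq_nonneg (A+1)) (mul_nonneg hLγ
          (sq_nonneg (norm2 βs + Real.sqrt S.card * lam)))]
      have e2' := mul_le_mul_of_nonneg_left e2 hLγ
      have hpos : (0:ℝ) < (p:ℝ) + 1 := by positivity
      have e4 : ((p:ℝ) + 2) * εc ^ 2 ≤ ((p:ℝ) + 1) * (2 * εc ^ 2) := by
        linarith [mul_nonneg (Nat.cast_nonneg p : (0:ℝ) ≤ (p:ℝ)) hεc2.le]
      have step : ((p:ℝ) + 1) * (L0 ^ 2 * (1 + γu) ^ 2
            * (∑ j, (β (p+2) j - β (p+1) j) ^ 2))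
          ≤ ((p:ℝ) + 1) * εc ^ 2 := by
        linarith [e1, e2', e3, hk', e4]
      exact le_of_mul_le_mul_left step hpos
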